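/- For any environments μ and μ* and any m, if μ and μ* are m-counterfactually equivalent, then they are m-equivalent. -/

import Mathlib

open scoped Classical
open Finset

/-- A POMDP without reward function ("environment"): finite sets of states, actions,
observations, a transition kernel `T`, an initial distribution `T0` and an
observation kernel `Obs`, all given as (row-)stochastic matrices of reals. -/
structure Env (S A O : Type) [Fintype S] [Fintype A] [Fintype O] where
  T : S → A → S → ℝ
  T0 : S → ℝ
  Obs : S → O → ℝ
  T_nonneg : ∀ s a s', 0 ≤ T s a s'
  T_sum : ∀ s a, ∑ s', T s a s' = 1
  T0_nonneg : ∀ s, 0 ≤ T0 s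
  T0_sum : ∑ s, T0 s = 1
  Obs_nonneg : ∀ s o, 0 ≤ Obs s o
  Obs_sum : ∀ s, ∑ o, Obs s o = 1

/-- A history `o₀a₁o₁…a_t o_t` is an initial observation together with a list of
action–observation pairs, stored in *reverse chronological order* (newest pair first). -/
abbrev Hist (A O : Type) := O × List (A × O)

/-- `HPrefix h h'` : the history `h` is an initial segment of `h'` (or equal to it). -/
def HPrefix {A O : Type} (h h' : Hist A O) : Prop := h.1 = h'.1 ∧ h.2 <:+ h'.2

/-- A policy maps histories to probability distributions over actions. -/
structure Policy (A O : Type) [Fintype A] where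
  act : Hist A O → A → ℝ
  nonneg : ∀ h a, 0 ≤ act h a
  sum_one : ∀ h, ∑ a, act h a = 1

/-- A deterministic policy: each output distribution is a point mass. -/
def Policy.IsDet {A O : Type} [Fintype A] (π : Policy A O) : Prop :=
  ∀ h, ∃ a, ∀ a', π.act h a' = if a' = a then 1 else 0

variable {S S' S'' A O : Type}

/-- Joint probability of a history together with the final state:
`histStateProb μ π o₀ l s` is the probability under `μ` and `π` of seeing the history
`(o₀, l)` and the state after the last observation being `s`. -/
noncomputable def histStateProb [Fintype S] [Fintype A] [Fintype O]
    (μ : Env S A O) (π : Policy A O) (o0 : O) : List (A × O) → S → ℝ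
  | [], s => μ.T0 s * μ.Obs s o0
  | (a, o) :: rest, s =>
      π.act (o0, rest) a * (∑ s', histStateProb μ π o0 rest s' * μ.T s' a s) * μ.Obs s o

/-- `μ(h | π)`: the probability of the history `h` under policy `π`:
`μ(o₀a₁o₁…a_t o_t | π) = ∑_{s₀…s_t} T₀(s₀)Obs(o₀|s₀)∏_k Obs(o_k|s_k)T(s_k|s_{k-1},a_k)π(a_k|…)`. -/
noncomputable def histProb [Fintype S] [Fintype A] [Fintype O]
    (μ : Env S A O) (π : Policy A O) (h : Hist A O) : ℝ :=
  ∑ s, histStateProb μ π h.1 h.2 s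

/-- `μ(h' | h, π)`: conditional probability of a history given another, via Bayes' rule;
set to `0` when `h` is not an initial segment of `h'` or the conditioning event has
probability `0`. -/
noncomputable def condProb [Fintype S] [Fintype A] [Fintype O]
    (μ : Env S A O) (π : Policy A O) (h h' : Hist A O) : ℝ :=
  if HPrefix h h' ∧ histProb μ π h ≠ 0 then histProb μ π h' / histProb μ π h else 0

/-- `m`-equivalence: all conditional probabilities of histories of length `≤ m`
coincide, for all policies. -/
def MEquiv [Fintype S] [Fintype S'] [Fintype A] [Fintype O]
    (μ : Env S A O) (μ' : Env S' A O) (m : ℕ) : Prop :=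
  ∀ (π : Policy A O) (h h' : Hist A O), h.2.length ≤ m → h'.2.length ≤ m →
    condProb μ π h h' = condProb μ' π h h'

/-- A deterministic environment policy of length `m`: a triple `(T̂₀, T̂, Ô)` with
`T̂₀ ∈ S`, `T̂ : S × A × {1,…,m} → S` (here `Fin m` with value `i` standing for turn `i+1`)
and `Ô : S × {0,…,m} → O`. -/
abbrev EnvPol (S A O : Type) (m : ℕ) := S × (S → A → Fin m → S) × (S → Fin (m + 1) → O)

/-- `μ(π_μ) = T₀(T̂₀) ⬝ ∏_{s,a,i} T(T̂(s,a,i)|s,a) ⬝ ∏_{s,i} Obs(Ô(s,i)|s)`. -/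
noncomputable def envPolProb [Fintype S] [Fintype A] [Fintype O]
    (μ : Env S A O) {m : ℕ} (ep : EnvPol S A O m) : ℝ :=
  μ.T0 ep.1 *
    ((∏ s, ∏ a, ∏ i, μ.T s a (ep.2.1 s a i)) * ∏ s, ∏ i, μ.Obs s (ep.2.2 s i))

/-- The state reached by following the environment policy `ep` along the actions of the
(reverse chronological) action–observation list: `s₀ = T̂₀`, `s_k = T̂(s_{k-1}, a_k, k)`. -/
def epState {m : ℕ} (ep : EnvPol S A O m) : List (A × O) → S
  | [] => ep.1
  | (a, _) :: rest =>
      if h : rest.length < m then ep.2.1 (epState ep rest) a ⟨rest.length, h⟩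
      else epState ep rest

/-- `μ(h | π_μ, π)`: the probability of the history `h = (o₀, l)` when the dynamics are
determined by the environment policy `ep` and the actions are drawn from `π`; it is
`∏_k π(a_k | h_{k-1})` if the observations of `h` match those generated by `ep` along the
actions of `h`, and `0` otherwise. -/
noncomputable def epHistProb {m : ℕ} [Fintype A] (ep : EnvPol S A O m) (π : Policy A O)
    (o0 : O) : List (A × O) → ℝ
  | [] => if ep.2.2 ep.1 0 = o0 then 1 else 0
  | (a, o) :: rest =>
      epHistProb ep π o0 rest * π.act (o0, rest) a *
        (if h : rest.length < m then
          (if ep.2.2 (ep.2.1 (epState ep rest) a ⟨rest.length, h⟩)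
              ⟨rest.length + 1, by omega⟩ = o then 1 else 0)
         else 0)

/-- `m`-counterfactual equivalence: for every finite collection `(h_{t_i}, π_i)` of
history–policy pairs with all `t_i ≤ m`,
`∑_{π_μ} μ(π_μ) ∏_i μ(h_{t_i}|π_μ,π_i) = ∑_{π_{μ'}} μ'(π_{μ'}) ∏_i μ'(h_{t_i}|π_{μ'},π_i)`. -/
def MCounterEquiv [Fintype S] [DecidableEq S] [Fintype S'] [DecidableEq S']
    [Fintype A] [DecidableEq A] [Fintype O]
    (μ : Env S A O) (μ' : Env S' A O) (m : ℕ) : Prop :=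
  ∀ (n : ℕ) (hs : Fin n → Hist A O) (πs : Fin n → Policy A O),
    (∀ i, (hs i).2.length ≤ m) →
    (∑ ep : EnvPol S A O m, envPolProb μ ep * ∏ i, epHistProb ep (πs i) (hs i).1 (hs i).2)
      = ∑ ep : EnvPol S' A O m, envPolProb μ' ep * ∏ i, epHistProb ep (πs i) (hs i).1 (hs i).2

/-- A deterministic environment: every transition and observation distribution is a
point mass. -/
def IsDetEnv [Fintype S] [Fintype A] [Fintype O] (μ : Env S A O) : Prop :=
  (∀ s a, ∃ s', ∀ s'', μ.T s a s'' = if s'' = s' then 1 else 0) ∧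
  (∀ s, ∃ o, ∀ o', μ.Obs s o' = if o' = o then 1 else 0)

/-- `μ(h | s₀ = s, π)` (probability of the history conditional on the initial state),
with the final state summed out below. -/
noncomputable def histStateProbFrom [Fintype S] [Fintype A] [Fintype O]
    (μ : Env S A O) (π : Policy A O) (s0 : S) (o0 : O) : List (A × O) → S → ℝ
  | [], s => (if s = s0 then 1 else 0) * μ.Obs s o0
  | (a, o) :: rest, s =>
      π.act (o0, rest) a *
        (∑ s', histStateProbFrom μ π s0 o0 rest s' * μ.T s' a s) * μ.Obs s o

/-- `μ(h | s₀ = s, π)`. -/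
noncomputable def histProbFrom [Fintype S] [Fintype A] [Fintype O]
    (μ : Env S A O) (π : Policy A O) (s0 : S) (h : Hist A O) : ℝ :=
  ∑ s, histStateProbFrom μ π s0 h.1 h.2 s

/-- The posterior `μ(s₀ = s | h)` over the initial state given a history, computed by
Bayes' rule from any policy `π` with `μ(h|π) > 0` (it is independent of the choice of
such a policy), and set to `0` if no such policy exists. -/
noncomputable def posterior [Fintype S] [Fintype A] [Fintype O]
    (μ : Env S A O) (h : Hist A O) (s : S) : ℝ :=
  if hex : ∃ π : Policy A O, 0 < histProb μ π h then
    μ.T0 s * histProbFrom μ hex.choose s h /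
      ∑ s', μ.T0 s' * histProbFrom μ hex.choose s' h
  else 0

/-- Given `m`, a pure learning process on `μ` is a map `P` from histories of length `≤ m`
to `[0,1]` realized, on some deterministic environment `μ'` that is `m`-counterfactually
equivalent to `μ`, as `P(h) = ∑_{s'} p_{s'} μ'(s₀ = s' | h)` for constants `p_{s'} ∈ [0,1]`. -/
def IsPureLearning [Fintype S] [DecidableEq S] [Fintype A] [DecidableEq A] [Fintype O]
    (μ : Env S A O) (m : ℕ) (P : Hist A O → ℝ) : Prop :=
  (∀ h : Hist A O, h.2.length ≤ m → P h ∈ Set.Icc (0 : ℝ) 1) ∧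
  ∃ (S' : Type) (_ : Fintype S') (_ : DecidableEq S') (μ' : Env S' A O) (p : S' → ℝ),
    IsDetEnv μ' ∧ MCounterEquiv μ μ' m ∧ (∀ s', p s' ∈ Set.Icc (0 : ℝ) 1) ∧
    ∀ h : Hist A O, h.2.length ≤ m → P h = ∑ s', p s' * posterior μ' h s'

/-- First components: the history (in reverse chronological order) generated after `t`
turns in a deterministic environment given by functions `(Td, Od)`, starting from state
`s0` and following the deterministic policy `p`; second component: the state reached. -/
def genHistAux (Td : S → A → S) (Od : S → O) (p : Hist A O → A) (s0 : S) :
    ℕ → List (A × O) × S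
  | 0 => ([], s0)
  | t + 1 =>
      let r := genHistAux Td Od p s0 t
      let a := p (Od s0, r.1)
      let s' := Td r.2 a
      ((a, Od s') :: r.1, s')

/-- `f_{s0}(p)` truncated at length `t`: the unique history of length `t` generated from
the initial state `s0` by the deterministic policy `p` in the deterministic environment
given by the functions `(Td, Od)`. -/
def genHist (Td : S → A → S) (Od : S → O) (p : Hist A O → A) (s0 : S) (t : ℕ) :
    Hist A O :=
  (Od s0, (genHistAux Td Od p s0 t).1)

/-- The fiber `F(f_s)` (for `s` a state of the deterministic environment `(Td', Od')`):
all initial states `s0` of the deterministic environment `(Td, Od)` whose generated-history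
map `f_{s0} : Π₀ → H_m` equals `f_s`. -/
noncomputable def fiber [Fintype S] (Td : S → A → S) (Od : S → O)
    (Td' : S' → A → S') (Od' : S' → O) (m : ℕ) (s : S') : Finset S :=
  Finset.univ.filter fun s0 => ∀ p : Hist A O → A, genHist Td Od p s0 m = genHist Td' Od' p s m


section Machinery
set_option linter.unusedSectionVars false



section Generic
variable {ι κ : Type} [Fintype ι] [Fintype κ] [DecidableEq ι]

def splitAt (i₀ : ι) : (ι → κ) ≃ κ × ({j : ι // j ≠ i₀} → κ) where
  toFun g := (g i₀, fun j => g j.1)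
  invFun q := fun j => if h : j = i₀ then q.1 else q.2 ⟨j, h⟩
  left_inv g := by funext j; by_cases h : j = i₀ <;> simp [h]
  right_inv q := by
    refine Prod.ext (by simp) ?_
    funext j
    simp [j.2]

lemma splitAt_symm_update (i₀ : ι) (x y : κ) (g' : {j : ι // j ≠ i₀} → κ) :
    (splitAt i₀).symm (x, g') = Function.update ((splitAt i₀).symm (y, g')) i₀ x := by
  funext j
  by_cases h : j = i₀ <;> simp [splitAt, Function.update, h]

lemma prod_split (i₀ : ι) (h : ι → ℝ) :
    ∏ i, h i = h i₀ * ∏ j : {j : ι // j ≠ i₀}, h j.1 := by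
  rw [← Finset.mul_prod_erase univ h (mem_univ i₀)]
  congr 1
  exact Finset.prod_subtype (univ.erase i₀) (fun x => by simp) h

lemma sum_pi_prod (p : ι → κ → ℝ) (hp : ∀ i, ∑ x, p i x = 1) :
    ∑ g : ι → κ, ∏ i, p i (g i) = 1 := by
  rw [← Fintype.prod_sum (fun i x => p i x)]
  simp [hp]

lemma sum_factor (p : ι → κ → ℝ) (hp : ∀ i, ∑ x, p i x = 1) (i₀ : ι)
    (F : (ι → κ) → ℝ) (f : κ → ℝ)
    (hF : ∀ g x, F (Function.update g i₀ x) = F g) :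
    ∑ g : ι → κ, (∏ i, p i (g i)) * (F g * f (g i₀))
      = (∑ x, p i₀ x * f x) * ∑ g : ι → κ, (∏ i, p i (g i)) * F g := by
  cases isEmpty_or_nonempty κ with
  | inl hk =>
    haveI : IsEmpty (ι → κ) := ⟨fun g => (hk.false (g i₀))⟩
    simp
  | inr hk =>
    obtain ⟨y⟩ := hk
    have e := splitAt (κ := κ) i₀
    have key : ∀ (G : (ι → κ) → ℝ),
        ∑ g : ι → κ, G g = ∑ x : κ, ∑ g' : {j : ι // j ≠ i₀} → κ,
          G ((splitAt i₀).symm (x, g')) := by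
      intro G
      rw [← Equiv.sum_comp (splitAt i₀).symm G, Fintype.sum_prod_type]
    have hFy : ∀ x g', F ((splitAt i₀).symm (x, g')) = F ((splitAt i₀).symm (y, g')) := by
      intro x g'
      rw [splitAt_symm_update i₀ x y g', hF]
    have hval : ∀ (x : κ) (g' : {j : ι // j ≠ i₀} → κ), ((splitAt i₀).symm (x, g')) i₀ = x := by
      intro x g'; simp [splitAt]
    have hprod : ∀ (x : κ) (g' : {j : ι // j ≠ i₀} → κ),
        (∏ i, p i (((splitAt i₀).symm (x, g')) i))
          = p i₀ x * ∏ j : {j : ι // j ≠ i₀}, p j.1 (g' j) := by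
      intro x g'
      rw [prod_split i₀]
      congr 1
      · rw [hval]
      · apply Finset.prod_congr rfl
        intro j _
        congr 1
        simp [splitAt, j.2]
    rw [key, key (fun g => (∏ i, p i (g i)) * F g)]
    have lhs_eq : ∀ x : κ, (∑ g' : {j : ι // j ≠ i₀} → κ,
        (∏ i, p i (((splitAt i₀).symm (x, g')) i)) * (F ((splitAt i₀).symm (x, g')) *
          f (((splitAt i₀).symm (x, g')) i₀)))
        = p i₀ x * f x * ∑ g' : {j : ι // j ≠ i₀} → κ,
            (∏ j : {j : ι // j ≠ i₀}, p j.1 (g' j)) * F ((splitAt i₀).symm (y, g')) := by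
      intro x
      rw [Finset.mul_sum]
      apply Finset.sum_congr rfl
      intro g' _
      rw [hprod, hval, hFy]
      ring
    have rhs_eq : ∀ x : κ, (∑ g' : {j : ι // j ≠ i₀} → κ,
        (∏ i, p i (((splitAt i₀).symm (x, g')) i)) * F ((splitAt i₀).symm (x, g')))
        = p i₀ x * ∑ g' : {j : ι // j ≠ i₀} → κ,
            (∏ j : {j : ι // j ≠ i₀}, p j.1 (g' j)) * F ((splitAt i₀).symm (y, g')) := by
      intro x
      rw [Finset.mul_sum]
      apply Finset.sum_congr rfl
      intro g' _
      rw [hprod, hFy]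
      ring
    simp only [lhs_eq, rhs_eq]
    rw [← Finset.sum_mul, ← Finset.sum_mul, hp i₀, one_mul]

end Generic

section Curried

def flat3 {X Y Z W : Type} : (X → Y → Z → W) ≃ (X × Y × Z → W) where
  toFun g p := g p.1 p.2.1 p.2.2
  invFun G x y z := G (x, y, z)
  left_inv g := rfl
  right_inv G := rfl

def flat2 {X Y W : Type} : (X → Y → W) ≃ (X × Y → W) where
  toFun g p := g p.1 p.2
  invFun G x y := G (x, y)
  left_inv g := rfl
  right_inv G := rfl

variable {X Y Z W : Type} [Fintype X] [Fintype Y] [Fintype Z] [Fintype W]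
  [DecidableEq X] [DecidableEq Y] [DecidableEq Z]

lemma conv3 (h : (X → Y → Z → W) → ℝ) :
    ∑ g : X → Y → Z → W, h g = ∑ G : X × Y × Z → W, h (flat3.symm G) :=
  (Equiv.sum_comp flat3.symm h).symm

lemma conv2 (h : (X → Y → W) → ℝ) :
    ∑ g : X → Y → W, h g = ∑ G : X × Y → W, h (flat2.symm G) :=
  (Equiv.sum_comp flat2.symm h).symm

lemma prodconv3 (p : X → Y → Z → W → ℝ) (G : X × Y × Z → W) :
    (∏ q : X × Y × Z, p q.1 q.2.1 q.2.2 (G q)) = ∏ x, ∏ y, ∏ z, p x y z (G (x, y, z)) := by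
  rw [Fintype.prod_prod_type]
  exact Finset.prod_congr rfl fun x _ => Fintype.prod_prod_type _

lemma prodconv2 (p : X → Y → W → ℝ) (G : X × Y → W) :
    (∏ q : X × Y, p q.1 q.2 (G q)) = ∏ x, ∏ y, p x y (G (x, y)) :=
  Fintype.prod_prod_type _

lemma sum_one3 (p : X → Y → Z → W → ℝ) (hp : ∀ x y z, ∑ w, p x y z w = 1) :
    ∑ g : X → Y → Z → W, (∏ x, ∏ y, ∏ z, p x y z (g x y z)) = 1 := by
  rw [conv3 (fun g => ∏ x, ∏ y, ∏ z, p x y z (g x y z))]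
  have := sum_pi_prod (fun q : X × Y × Z => p q.1 q.2.1 q.2.2) (fun q => hp _ _ _)
  simp only [prodconv3] at this
  exact this

lemma sum_one2 (p : X → Y → W → ℝ) (hp : ∀ x y, ∑ w, p x y w = 1) :
    ∑ g : X → Y → W, (∏ x, ∏ y, p x y (g x y)) = 1 := by
  rw [conv2 (fun g => ∏ x, ∏ y, p x y (g x y))]
  have := sum_pi_prod (fun q : X × Y => p q.1 q.2) (fun q => hp _ _)
  simp only [prodconv2] at this
  exact this

lemma sum_factor3 (p : X → Y → Z → W → ℝ) (hp : ∀ x y z, ∑ w, p x y z w = 1)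
    (x₀ : X) (y₀ : Y) (z₀ : Z) (F : (X → Y → Z → W) → ℝ) (f : W → ℝ)
    (hF : ∀ g w, F (fun x y z => if x = x₀ ∧ y = y₀ ∧ z = z₀ then w else g x y z) = F g) :
    ∑ g : X → Y → Z → W, (∏ x, ∏ y, ∏ z, p x y z (g x y z)) * (F g * f (g x₀ y₀ z₀))
      = (∑ w, p x₀ y₀ z₀ w * f w) *
        ∑ g : X → Y → Z → W, (∏ x, ∏ y, ∏ z, p x y z (g x y z)) * F g := by
  have hFq : ∀ (G : X × Y × Z → W) (w : W),
      F (flat3.symm (Function.update G (x₀, y₀, z₀) w)) = F (flat3.symm G) := by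
    intro G w
    have h1 : flat3.symm (Function.update G (x₀, y₀, z₀) w)
        = fun x y z => if x = x₀ ∧ y = y₀ ∧ z = z₀ then w else (flat3.symm G) x y z := by
      funext x y z
      show Function.update G (x₀, y₀, z₀) w (x, y, z) = _
      rw [Function.update_apply]
      simp only [Prod.mk.injEq]
      rfl
    rw [h1]
    exact hF _ w
  have key := sum_factor (fun q : X × Y × Z => p q.1 q.2.1 q.2.2) (fun q => hp _ _ _)
      (x₀, y₀, z₀) (fun G => F (flat3.symm G)) f hFq
  rw [conv3 (fun g => (∏ x, ∏ y, ∏ z, p x y z (g x y z)) * (F g * f (g x₀ y₀ z₀))),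
      conv3 (fun g => (∏ x, ∏ y, ∏ z, p x y z (g x y z)) * F g)]
  simp only [prodconv3] at key
  exact key

lemma sum_factor2 (p : X → Y → W → ℝ) (hp : ∀ x y, ∑ w, p x y w = 1)
    (x₀ : X) (y₀ : Y) (F : (X → Y → W) → ℝ) (f : W → ℝ)
    (hF : ∀ g w, F (fun x y => if x = x₀ ∧ y = y₀ then w else g x y) = F g) :
    ∑ g : X → Y → W, (∏ x, ∏ y, p x y (g x y)) * (F g * f (g x₀ y₀))
      = (∑ w, p x₀ y₀ w * f w) *
        ∑ g : X → Y → W, (∏ x, ∏ y, p x y (g x y)) * F g := by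
  have hFq : ∀ (G : X × Y → W) (w : W),
      F (flat2.symm (Function.update G (x₀, y₀) w)) = F (flat2.symm G) := by
    intro G w
    have h1 : flat2.symm (Function.update G (x₀, y₀) w)
        = fun x y => if x = x₀ ∧ y = y₀ then w else (flat2.symm G) x y := by
      funext x y
      show Function.update G (x₀, y₀) w (x, y) = _
      rw [Function.update_apply]
      simp only [Prod.mk.injEq]
      rfl
    rw [h1]
    exact hF _ w
  have key := sum_factor (fun q : X × Y => p q.1 q.2) (fun q => hp _ _)
      (x₀, y₀) (fun G => F (flat2.symm G)) f hFq
  rw [conv2 (fun g => (∏ x, ∏ y, p x y (g x y)) * (F g * f (g x₀ y₀))),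
      conv2 (fun g => (∏ x, ∏ y, p x y (g x y)) * F g)]
  simp only [prodconv2] at key
  exact key

end Curried

end Machinery

section Domain
set_option linter.unusedSectionVars false
set_option maxHeartbeats 1000000

lemma chi_expand {α : Type} [Fintype α] [DecidableEq α] (x : α) (R : α → ℝ) :
    ∑ y, (if x = y then (1:ℝ) else 0) * R y = R x := by
  simp [ite_mul, Finset.sum_ite_eq]

lemma sum_swap4 {α β γ δ : Type} [Fintype α] [Fintype β] [Fintype γ] [Fintype δ]
    (f : α → β → γ → δ → ℝ) :
    ∑ a, ∑ b, ∑ c, ∑ d, f a b c d = ∑ d, ∑ a, ∑ b, ∑ c, f a b c d := by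
  have h1 : ∀ a, (∑ b, ∑ c, ∑ d, f a b c d) = ∑ d, ∑ b, ∑ c, f a b c d := by
    intro a
    have h2 : ∀ b, (∑ c, ∑ d, f a b c d) = ∑ d, ∑ c, f a b c d := fun b => Finset.sum_comm
    rw [Finset.sum_congr rfl fun b _ => h2 b]
    exact Finset.sum_comm
  rw [Finset.sum_congr rfl fun a _ => h1 a]
  exact Finset.sum_comm

variable {S A O : Type} [Fintype S] [DecidableEq S] [Fintype A] [DecidableEq A] [Fintype O]

lemma epState_congr {m : ℕ} (s0 : S) (T1 T2 : S → A → Fin m → S)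
    (O1 O2 : S → Fin (m + 1) → O) (l : List (A × O))
    (hT : ∀ s a (i : Fin m), i.1 < l.length → T1 s a i = T2 s a i) :
    epState (S := S) (A := A) (O := O) (m := m) (s0, T1, O1) l = epState (s0, T2, O2) l := by
  induction l with
  | nil => rfl
  | cons p rest ih =>
    obtain ⟨a, o⟩ := p
    have hrec := ih (fun s a i hi => hT s a i (by simp only [List.length_cons]; omega))
    simp only [epState]
    split_ifs with h
    · rw [hrec]
      exact hT _ _ _ (by simp only [List.length_cons]; omega)
    · exact hrec

lemma epHistProb_congr {m : ℕ} (π : Policy A O) (o0 : O) (s0 : S)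
    (T1 T2 : S → A → Fin m → S) (O1 O2 : S → Fin (m + 1) → O) (l : List (A × O))
    (hT : ∀ s a (i : Fin m), i.1 < l.length → T1 s a i = T2 s a i)
    (hO : ∀ s (i : Fin (m + 1)), i.1 ≤ l.length → O1 s i = O2 s i) :
    epHistProb (S := S) (A := A) (O := O) (m := m) (s0, T1, O1) π o0 l
      = epHistProb (s0, T2, O2) π o0 l := by
  induction l with
  | nil =>
    have h := hO s0 0 (by simp)
    simp only [epHistProb, h]
  | cons p rest ih =>
    obtain ⟨a, o⟩ := p
    have hT' : ∀ s a (i : Fin m), i.1 < rest.length → T1 s a i = T2 s a i :=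
      fun s a i hi => hT s a i (by simp only [List.length_cons]; omega)
    have hO' : ∀ s (i : Fin (m + 1)), i.1 ≤ rest.length → O1 s i = O2 s i :=
      fun s i hi => hO s i (by simp only [List.length_cons]; omega)
    have hrec := ih hT' hO'
    have hstate := epState_congr s0 T1 T2 O1 O2 rest hT'
    simp only [epHistProb, hrec]
    congr 1
    by_cases h : rest.length < m
    · rw [dif_pos h, dif_pos h]
      have hx : O1 (T1 (epState (s0, T1, O1) rest) a ⟨rest.length, h⟩)
            ⟨rest.length + 1, by omega⟩
          = O2 (T2 (epState (s0, T2, O2) rest) a ⟨rest.length, h⟩)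
            ⟨rest.length + 1, by omega⟩ := by
        rw [hstate, hT _ _ ⟨rest.length, h⟩ (by simp only [List.length_cons]; omega),
          hO _ ⟨rest.length + 1, by omega⟩ (by simp only [List.length_cons]; omega)]
      exact if_congr (by rw [hx]) rfl rfl
    · rw [dif_neg h, dif_neg h]

end Domain

section MasterSec
set_option linter.unusedSectionVars false
set_option maxHeartbeats 2000000

variable {S A O : Type} [Fintype S] [DecidableEq S] [Fintype A] [DecidableEq A] [Fintype O]

lemma master (μ : Env S A O) (m : ℕ) (π : Policy A O) (o0 : O) :
    ∀ (l : List (A × O)), l.length ≤ m → ∀ s : S,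
    (∑ s0 : S, ∑ t : S → A → Fin m → S, ∑ g : S → Fin (m + 1) → O,
      (μ.T0 s0 * ((∏ x, ∏ y, ∏ z, μ.T x y (t x y z)) * (∏ x, ∏ z, μ.Obs x (g x z)))) *
        (epHistProb (S := S) (m := m) (s0, t, g) π o0 l *
          (if epState (s0, t, g) l = s then (1:ℝ) else 0)))
      = histStateProb μ π o0 l s := by
  intro l
  induction l with
  | nil =>
    intro _ s
    have hO1 : ∀ s0 : S,
        (∑ g : S → Fin (m + 1) → O, (∏ x, ∏ z, μ.Obs x (g x z)) *
          ((1:ℝ) * (if g s0 (0 : Fin (m + 1)) = o0 then (1:ℝ) else 0)))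
        = μ.Obs s0 o0 := by
      intro s0
      rw [sum_factor2 (fun x (_ : Fin (m + 1)) w => μ.Obs x w) (fun x _ => μ.Obs_sum x) s0 0
        (fun _ => (1:ℝ)) (fun w => if w = o0 then (1:ℝ) else 0) (fun g w => rfl)]
      have h1 : (∑ w : O, μ.Obs s0 w * (if w = o0 then (1:ℝ) else 0)) = μ.Obs s0 o0 := by
        simp [mul_ite, Finset.sum_ite_eq']
      have h2 : (∑ g : S → Fin (m + 1) → O,
          (∏ x, ∏ z, μ.Obs x (g x z)) * ((fun _ => (1:ℝ)) g)) = 1 := by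
        simp only [mul_one]
        exact sum_one2 (fun x (_ : Fin (m + 1)) w => μ.Obs x w) (fun x _ => μ.Obs_sum x)
      rw [h1, h2, mul_one]
    calc (∑ s0 : S, ∑ t : S → A → Fin m → S, ∑ g : S → Fin (m + 1) → O,
          (μ.T0 s0 * ((∏ x, ∏ y, ∏ z, μ.T x y (t x y z)) * (∏ x, ∏ z, μ.Obs x (g x z)))) *
            (epHistProb (S := S) (m := m) (s0, t, g) π o0 [] *
              (if epState (s0, t, g) [] = s then (1:ℝ) else 0)))
        = ∑ s0 : S, (μ.T0 s0 * (if s0 = s then (1:ℝ) else 0)) *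
            ((∑ t : S → A → Fin m → S, ∏ x, ∏ y, ∏ z, μ.T x y (t x y z)) *
              (∑ g : S → Fin (m + 1) → O, (∏ x, ∏ z, μ.Obs x (g x z)) *
                ((1:ℝ) * (if g s0 (0 : Fin (m + 1)) = o0 then (1:ℝ) else 0)))) := by
          refine Finset.sum_congr rfl fun s0 _ => ?_
          simp only [epHistProb, epState]
          rw [Finset.sum_mul_sum, Finset.mul_sum]
          refine Finset.sum_congr rfl fun t _ => ?_
          rw [Finset.mul_sum]
          refine Finset.sum_congr rfl fun g _ => ?_
          ring_nf
          rfl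
      _ = ∑ s0 : S, (μ.T0 s0 * (if s0 = s then (1:ℝ) else 0)) * μ.Obs s0 o0 := by
          refine Finset.sum_congr rfl fun s0 _ => ?_
          rw [sum_one3 (fun x y (_ : Fin m) w => μ.T x y w) (fun x y _ => μ.T_sum x y),
            hO1 s0, one_mul]
      _ = histStateProb μ π o0 [] s := by
          simp only [histStateProb]
          simp [mul_ite, ite_mul, Finset.sum_ite_eq']
  | cons pr rest ih =>
    obtain ⟨a, o⟩ := pr
    intro hlen s
    have hk : rest.length < m := by simp only [List.length_cons] at hlen; omega
    have hrl : rest.length ≤ m := le_of_lt hk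
    have unfold1 : ∀ (s0 : S) (t : S → A → Fin m → S) (g : S → Fin (m + 1) → O),
        epHistProb (S := S) (m := m) (s0, t, g) π o0 ((a, o) :: rest)
          = epHistProb (s0, t, g) π o0 rest * π.act (o0, rest) a *
            (if g (t (epState (s0, t, g) rest) a ⟨rest.length, hk⟩)
                ⟨rest.length + 1, Nat.succ_lt_succ hk⟩ = o then (1:ℝ) else 0) := by
      intro s0 t g
      simp only [epHistProb]
      rw [dif_pos hk]
    have unfold2 : ∀ (s0 : S) (t : S → A → Fin m → S) (g : S → Fin (m + 1) → O),
        epState (S := S) (m := m) (s0, t, g) ((a, o) :: rest)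
          = t (epState (s0, t, g) rest) a ⟨rest.length, hk⟩ := by
      intro s0 t g
      simp only [epState]
      rw [dif_pos hk]
    have step1 : ∀ (s0 : S) (t : S → A → Fin m → S) (g : S → Fin (m + 1) → O),
        (μ.T0 s0 * ((∏ x, ∏ y, ∏ z, μ.T x y (t x y z)) * (∏ x, ∏ z, μ.Obs x (g x z)))) *
          (epHistProb (S := S) (m := m) (s0, t, g) π o0 ((a, o) :: rest) *
            (if epState (s0, t, g) ((a, o) :: rest) = s then (1:ℝ) else 0))
        = π.act (o0, rest) a * ∑ s' : S,
            (if epState (s0, t, g) rest = s' then (1:ℝ) else 0) *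
            (μ.T0 s0 * ((∏ x, ∏ y, ∏ z, μ.T x y (t x y z)) *
              ((if t s' a ⟨rest.length, hk⟩ = s then (1:ℝ) else 0) *
                ((∏ x, ∏ z, μ.Obs x (g x z)) *
                  (epHistProb (s0, t, g) π o0 rest *
                    (if g s ⟨rest.length + 1, Nat.succ_lt_succ hk⟩ = o
                      then (1:ℝ) else 0)))))) := by
      intro s0 t g
      rw [unfold1 s0 t g, unfold2 s0 t g, chi_expand (epState (s0, t, g) rest)]
      by_cases hx : t (epState (s0, t, g) rest) a ⟨rest.length, hk⟩ = s
      · rw [hx]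
        simp only [if_pos rfl]
        ring
      · simp only [if_neg hx]
        ring
    have hOfac : ∀ (s' : S) (s0 : S) (t : S → A → Fin m → S),
        (∑ g : S → Fin (m + 1) → O, (∏ x, ∏ z, μ.Obs x (g x z)) *
          ((epHistProb (S := S) (m := m) (s0, t, g) π o0 rest *
            (if epState (s0, t, g) rest = s' then (1:ℝ) else 0)) *
            (if g s ⟨rest.length + 1, Nat.succ_lt_succ hk⟩ = o then (1:ℝ) else 0)))
        = μ.Obs s o * ∑ g : S → Fin (m + 1) → O, (∏ x, ∏ z, μ.Obs x (g x z)) *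
            (epHistProb (s0, t, g) π o0 rest *
              (if epState (s0, t, g) rest = s' then (1:ℝ) else 0)) := by
      intro s' s0 t
      rw [sum_factor2 (fun x (_ : Fin (m + 1)) w => μ.Obs x w) (fun x _ => μ.Obs_sum x)
        s ⟨rest.length + 1, Nat.succ_lt_succ hk⟩
        (fun g => epHistProb (s0, t, g) π o0 rest *
          (if epState (s0, t, g) rest = s' then (1:ℝ) else 0))
        (fun w => if w = o then (1:ℝ) else 0)
        (fun g w => by
          beta_reduce
          have hO' : ∀ (x : S) (i : Fin (m + 1)), i.1 ≤ rest.length →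
              (if x = s ∧ i = (⟨rest.length + 1, Nat.succ_lt_succ hk⟩ : Fin (m + 1))
                then w else g x i) = g x i := by
            intro x i hi
            rw [if_neg]
            rintro ⟨-, h2⟩
            rw [h2] at hi
            have hx : rest.length + 1 ≤ rest.length := hi
            omega
          rw [epHistProb_congr π o0 s0 t t _ g rest (fun _ _ _ _ => rfl) hO',
            epState_congr s0 t t _ g rest (fun _ _ _ _ => rfl)])]
      congr 1
      simp [mul_ite, Finset.sum_ite_eq']
    have hTfac : ∀ (s' : S) (s0 : S),
        (∑ t : S → A → Fin m → S, (∏ x, ∏ y, ∏ z, μ.T x y (t x y z)) *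
          ((∑ g : S → Fin (m + 1) → O, (∏ x, ∏ z, μ.Obs x (g x z)) *
            (epHistProb (S := S) (m := m) (s0, t, g) π o0 rest *
              (if epState (s0, t, g) rest = s' then (1:ℝ) else 0))) *
            (if t s' a ⟨rest.length, hk⟩ = s then (1:ℝ) else 0)))
        = μ.T s' a s * ∑ t : S → A → Fin m → S, (∏ x, ∏ y, ∏ z, μ.T x y (t x y z)) *
            (∑ g : S → Fin (m + 1) → O, (∏ x, ∏ z, μ.Obs x (g x z)) *
              (epHistProb (s0, t, g) π o0 rest *
                (if epState (s0, t, g) rest = s' then (1:ℝ) else 0))) := by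
      intro s' s0
      rw [sum_factor3 (fun x y (_ : Fin m) w => μ.T x y w) (fun x y _ => μ.T_sum x y)
        s' a ⟨rest.length, hk⟩
        (fun t => ∑ g : S → Fin (m + 1) → O, (∏ x, ∏ z, μ.Obs x (g x z)) *
          (epHistProb (s0, t, g) π o0 rest *
            (if epState (s0, t, g) rest = s' then (1:ℝ) else 0)))
        (fun w => if w = s then (1:ℝ) else 0)
        (fun t w => by
          beta_reduce
          have hT' : ∀ (x : S) (y : A) (i : Fin m), i.1 < rest.length →
              (if x = s' ∧ y = a ∧ i = (⟨rest.length, hk⟩ : Fin m)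
                then w else t x y i) = t x y i := by
            intro x y i hi
            rw [if_neg]
            rintro ⟨-, -, h3⟩
            rw [h3] at hi
            have hx : rest.length < rest.length := hi
            omega
          refine Finset.sum_congr rfl fun g _ => ?_
          rw [epHistProb_congr π o0 s0 _ t g g rest hT' (fun _ _ _ => rfl),
            epState_congr s0 _ t g g rest hT'])]
      congr 1
      simp [mul_ite, Finset.sum_ite_eq']
    have step2 : ∀ s' : S,
        (∑ s0 : S, ∑ t : S → A → Fin m → S, ∑ g : S → Fin (m + 1) → O,
          (if epState (S := S) (m := m) (s0, t, g) rest = s' then (1:ℝ) else 0) *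
          (μ.T0 s0 * ((∏ x, ∏ y, ∏ z, μ.T x y (t x y z)) *
            ((if t s' a ⟨rest.length, hk⟩ = s then (1:ℝ) else 0) *
              ((∏ x, ∏ z, μ.Obs x (g x z)) *
                (epHistProb (s0, t, g) π o0 rest *
                  (if g s ⟨rest.length + 1, Nat.succ_lt_succ hk⟩ = o
                    then (1:ℝ) else 0)))))))
        = μ.Obs s o * (μ.T s' a s * histStateProb μ π o0 rest s') := by
      intro s'
      have hIH : (∑ s0 : S, μ.T0 s0 * ∑ t : S → A → Fin m → S,
          (∏ x, ∏ y, ∏ z, μ.T x y (t x y z)) *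
            ∑ g : S → Fin (m + 1) → O, (∏ x, ∏ z, μ.Obs x (g x z)) *
              (epHistProb (S := S) (m := m) (s0, t, g) π o0 rest *
                (if epState (s0, t, g) rest = s' then (1:ℝ) else 0)))
          = histStateProb μ π o0 rest s' := by
        rw [← ih hrl s']
        simp only [Finset.mul_sum]
        refine Finset.sum_congr rfl fun s0 _ => Finset.sum_congr rfl fun t _ =>
          Finset.sum_congr rfl fun g _ => ?_
        ring
      calc (∑ s0 : S, ∑ t : S → A → Fin m → S, ∑ g : S → Fin (m + 1) → O,
            (if epState (S := S) (m := m) (s0, t, g) rest = s' then (1:ℝ) else 0) *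
            (μ.T0 s0 * ((∏ x, ∏ y, ∏ z, μ.T x y (t x y z)) *
              ((if t s' a ⟨rest.length, hk⟩ = s then (1:ℝ) else 0) *
                ((∏ x, ∏ z, μ.Obs x (g x z)) *
                  (epHistProb (s0, t, g) π o0 rest *
                    (if g s ⟨rest.length + 1, Nat.succ_lt_succ hk⟩ = o
                      then (1:ℝ) else 0)))))))
          = ∑ s0 : S, μ.T0 s0 * ∑ t : S → A → Fin m → S,
              (∏ x, ∏ y, ∏ z, μ.T x y (t x y z)) *
              ((∑ g : S → Fin (m + 1) → O, (∏ x, ∏ z, μ.Obs x (g x z)) *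
                ((epHistProb (s0, t, g) π o0 rest *
                  (if epState (s0, t, g) rest = s' then (1:ℝ) else 0)) *
                  (if g s ⟨rest.length + 1, Nat.succ_lt_succ hk⟩ = o then (1:ℝ) else 0))) *
                (if t s' a ⟨rest.length, hk⟩ = s then (1:ℝ) else 0)) := by
            simp only [Finset.mul_sum, Finset.sum_mul]
            refine Finset.sum_congr rfl fun s0 _ => Finset.sum_congr rfl fun t _ =>
              Finset.sum_congr rfl fun g _ => ?_
            ring
        _ = ∑ s0 : S, μ.T0 s0 * ∑ t : S → A → Fin m → S,
              (∏ x, ∏ y, ∏ z, μ.T x y (t x y z)) *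
              ((μ.Obs s o * ∑ g : S → Fin (m + 1) → O, (∏ x, ∏ z, μ.Obs x (g x z)) *
                (epHistProb (s0, t, g) π o0 rest *
                  (if epState (s0, t, g) rest = s' then (1:ℝ) else 0))) *
                (if t s' a ⟨rest.length, hk⟩ = s then (1:ℝ) else 0)) := by
            refine Finset.sum_congr rfl fun s0 _ => ?_
            congr 1
            refine Finset.sum_congr rfl fun t _ => ?_
            rw [hOfac s' s0 t]
        _ = ∑ s0 : S, μ.T0 s0 * (μ.Obs s o *
              ∑ t : S → A → Fin m → S, (∏ x, ∏ y, ∏ z, μ.T x y (t x y z)) *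
              ((∑ g : S → Fin (m + 1) → O, (∏ x, ∏ z, μ.Obs x (g x z)) *
                (epHistProb (s0, t, g) π o0 rest *
                  (if epState (s0, t, g) rest = s' then (1:ℝ) else 0))) *
                (if t s' a ⟨rest.length, hk⟩ = s then (1:ℝ) else 0))) := by
            refine Finset.sum_congr rfl fun s0 _ => ?_
            congr 1
            rw [Finset.mul_sum]
            refine Finset.sum_congr rfl fun t _ => ?_
            ring
        _ = ∑ s0 : S, μ.T0 s0 * (μ.Obs s o * (μ.T s' a s *
              ∑ t : S → A → Fin m → S, (∏ x, ∏ y, ∏ z, μ.T x y (t x y z)) *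
                (∑ g : S → Fin (m + 1) → O, (∏ x, ∏ z, μ.Obs x (g x z)) *
                  (epHistProb (s0, t, g) π o0 rest *
                    (if epState (s0, t, g) rest = s' then (1:ℝ) else 0))))) := by
            refine Finset.sum_congr rfl fun s0 _ => ?_
            rw [hTfac s' s0]
        _ = μ.Obs s o * (μ.T s' a s * histStateProb μ π o0 rest s') := by
            rw [← hIH, Finset.mul_sum, Finset.mul_sum]
            refine Finset.sum_congr rfl fun s0 _ => ?_
            ring
      done
    calc (∑ s0 : S, ∑ t : S → A → Fin m → S, ∑ g : S → Fin (m + 1) → O,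
          (μ.T0 s0 * ((∏ x, ∏ y, ∏ z, μ.T x y (t x y z)) * (∏ x, ∏ z, μ.Obs x (g x z)))) *
            (epHistProb (S := S) (m := m) (s0, t, g) π o0 ((a, o) :: rest) *
              (if epState (s0, t, g) ((a, o) :: rest) = s then (1:ℝ) else 0)))
        = ∑ s0 : S, ∑ t : S → A → Fin m → S, ∑ g : S → Fin (m + 1) → O,
            π.act (o0, rest) a * ∑ s' : S,
            (if epState (S := S) (m := m) (s0, t, g) rest = s' then (1:ℝ) else 0) *
            (μ.T0 s0 * ((∏ x, ∏ y, ∏ z, μ.T x y (t x y z)) *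
              ((if t s' a ⟨rest.length, hk⟩ = s then (1:ℝ) else 0) *
                ((∏ x, ∏ z, μ.Obs x (g x z)) *
                  (epHistProb (s0, t, g) π o0 rest *
                    (if g s ⟨rest.length + 1, Nat.succ_lt_succ hk⟩ = o
                      then (1:ℝ) else 0)))))) := by
          refine Finset.sum_congr rfl fun s0 _ => Finset.sum_congr rfl fun t _ =>
            Finset.sum_congr rfl fun g _ => step1 s0 t g
      _ = π.act (o0, rest) a * ∑ s' : S, ∑ s0 : S, ∑ t : S → A → Fin m → S,
            ∑ g : S → Fin (m + 1) → O,
            (if epState (S := S) (m := m) (s0, t, g) rest = s' then (1:ℝ) else 0) *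
            (μ.T0 s0 * ((∏ x, ∏ y, ∏ z, μ.T x y (t x y z)) *
              ((if t s' a ⟨rest.length, hk⟩ = s then (1:ℝ) else 0) *
                ((∏ x, ∏ z, μ.Obs x (g x z)) *
                  (epHistProb (s0, t, g) π o0 rest *
                    (if g s ⟨rest.length + 1, Nat.succ_lt_succ hk⟩ = o
                      then (1:ℝ) else 0)))))) := by
          simp only [← Finset.mul_sum]
          congr 1
          rw [sum_swap4]
      _ = π.act (o0, rest) a * ∑ s' : S,
            μ.Obs s o * (μ.T s' a s * histStateProb μ π o0 rest s') := by
          congr 1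
          exact Finset.sum_congr rfl fun s' _ => step2 s'
      _ = histStateProb μ π o0 ((a, o) :: rest) s := by
          simp only [histStateProb]
          rw [mul_assoc, Finset.sum_mul, Finset.mul_sum, Finset.mul_sum]
          exact Finset.sum_congr rfl fun s' _ => by ring

end MasterSec

section Final
set_option linter.unusedSectionVars false
set_option maxHeartbeats 1000000

variable {S A O : Type} [Fintype S] [DecidableEq S] [Fintype A] [DecidableEq A] [Fintype O]

lemma split_sum (m : ℕ) (h : EnvPol S A O m → ℝ) :
    ∑ ep : EnvPol S A O m, h ep
      = ∑ s0 : S, ∑ t : S → A → Fin m → S, ∑ g : S → Fin (m + 1) → O, h (s0, t, g) := by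
  rw [Fintype.sum_prod_type]
  exact Finset.sum_congr rfl fun s0 _ => Fintype.sum_prod_type _

lemma sum_envPol (μ : Env S A O) (m : ℕ) (π : Policy A O) (o0 : O)
    (l : List (A × O)) (hl : l.length ≤ m) :
    ∑ ep : EnvPol S A O m, envPolProb μ ep * epHistProb ep π o0 l
      = histProb μ π (o0, l) := by
  calc ∑ ep : EnvPol S A O m, envPolProb μ ep * epHistProb ep π o0 l
      = ∑ ep : EnvPol S A O m, ∑ s : S,
          envPolProb μ ep * (epHistProb ep π o0 l *
            (if epState ep l = s then (1:ℝ) else 0)) := by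
        refine Finset.sum_congr rfl fun ep _ => ?_
        rw [← Finset.mul_sum, ← Finset.mul_sum]
        congr 1
        simp [Finset.sum_ite_eq]
    _ = ∑ s : S, ∑ ep : EnvPol S A O m,
          envPolProb μ ep * (epHistProb ep π o0 l *
            (if epState ep l = s then (1:ℝ) else 0)) := Finset.sum_comm
    _ = ∑ s : S, histStateProb μ π o0 l s := by
        refine Finset.sum_congr rfl fun s _ => ?_
        rw [split_sum m]
        exact master μ m π o0 l hl s
    _ = histProb μ π (o0, l) := rfl

end Final

/-- If the environments `μ` and `μ'` are `m`-counterfactually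
equivalent, then they are `m`-equivalent. -/
theorem counterfactual_equiv_implies_equiv
    {S S' A O : Type} [Fintype S] [DecidableEq S] [Fintype S'] [DecidableEq S']
    [Fintype A] [DecidableEq A] [Fintype O]
    (μ : Env S A O) (μ' : Env S' A O) (m : ℕ)
    (hce : MCounterEquiv μ μ' m) : MEquiv μ μ' m := by
  intro π h h' hlen hlen'
  have key : ∀ hh : Hist A O, hh.2.length ≤ m → histProb μ π hh = histProb μ' π hh := by
    intro hh hl
    have h1 := hce 1 (fun _ => hh) (fun _ => π) (fun _ => hl)
    simp only [Fin.prod_univ_one] at h1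
    calc histProb μ π hh
        = ∑ ep : EnvPol S A O m, envPolProb μ ep * epHistProb ep π hh.1 hh.2 :=
          (sum_envPol μ m π hh.1 hh.2 hl).symm
      _ = ∑ ep : EnvPol S' A O m, envPolProb μ' ep * epHistProb ep π hh.1 hh.2 := h1
      _ = histProb μ' π hh := sum_envPol μ' m π hh.1 hh.2 hl
  simp only [condProb, key h hlen, key h' hlen']
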